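/- Any two Δ-orderings arising from the same completed coloring sequence on a knot diagram yield the same attached sequence, and hence the same value of Σ a_i; in particular the Wirtinger width contribution 𝕎 of a completed coloring sequence is well-defined despite non-uniqueness of the Δ-ordering. -/

import Mathlib

/-! Combinatorial framework: knot diagrams and Wirtinger colorings. -/

structure Diagram where
  Strand : Type
  Crossing : Type
  [fintypeStrand : Fintype Strand]
  [decEqStrand : DecidableEq Strand]
  overStrand : Crossing → Strand
  under1 : Crossing → Strand
  under2 : Crossing → Strand
  under_ne : ∀ x, under1 x ≠ under2 x

attribute [instance] Diagram.fintypeStrand Diagram.decEqStrand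

/-- Two strands are adjacent if they are the two under-strands of a common crossing. -/
def Diagram.Adjacent (D : Diagram) (s s' : D.Strand) : Prop :=
  ∃ x : D.Crossing, (D.under1 x = s ∧ D.under2 x = s') ∨ (D.under1 x = s' ∧ D.under2 x = s)

/-- A set of strands is connected if it can be enumerated so that consecutive
strands are adjacent. -/
def Diagram.ConnectedSet (D : Diagram) (A : Set D.Strand) : Prop :=
  ∃ l : List D.Strand, l.Nodup ∧ (∀ s, s ∈ l ↔ s ∈ A) ∧ l.Chain' D.Adjacent

/-- A partial coloring: a domain of colored strands and a color function
(only its values on `dom` are meaningful). -/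
structure PartialColoring (D : Diagram) where
  dom : Finset D.Strand
  col : D.Strand → ℤ

/-- Seed addition at stage `t`: a new strand is colored with the fresh color `t`. -/
def SeedAdd (D : Diagram) (t : ℤ) (P Q : PartialColoring D) : Prop :=
  ∃ s, s ∉ P.dom ∧ Q.dom = insert s P.dom ∧ Q.col s = t ∧
    (∀ u ∈ P.dom, Q.col u = P.col u) ∧ (∀ u ∈ P.dom, P.col u ≠ t)

/-- A coloring move over the crossing `x`: an uncolored under-strand of `x`
inherits the color of the other (already colored) under-strand, the over-strand
of `x` being already colored. -/
def MoveOver (D : Diagram) (x : D.Crossing) (P Q : PartialColoring D) : Prop :=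
  ∃ sq sp : D.Strand,
    sq ∉ P.dom ∧ sp ∈ P.dom ∧ D.overStrand x ∈ P.dom ∧
    ((D.under1 x = sq ∧ D.under2 x = sp) ∨ (D.under1 x = sp ∧ D.under2 x = sq)) ∧
    Q.dom = insert sq P.dom ∧ Q.col sq = P.col sp ∧
    (∀ u ∈ P.dom, Q.col u = P.col u)

def Move (D : Diagram) (P Q : PartialColoring D) : Prop := ∃ x, MoveOver D x P Q

/-- A (partial) coloring sequence of length `J`, starting from the vacuous coloring,
each step a seed addition (with fresh color = stage) or a coloring move. -/
structure ColoringSeq (D : Diagram) (J : ℕ) where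
  c : ℕ → PartialColoring D
  init : (c 0).dom = ∅
  step : ∀ t : ℕ, t + 1 ≤ J →
    SeedAdd D ((t : ℤ) + 1) (c t) (c (t + 1)) ∨ Move D (c t) (c (t + 1))

namespace ColoringSeq

variable {D : Diagram} {J : ℕ}

/-- A completed coloring sequence colors all strands. -/
def Completed (S : ColoringSeq D J) : Prop := (S.c J).dom = Finset.univ

/-- `s` is colored at stage `t`. -/
def StageOf (S : ColoringSeq D J) (s : D.Strand) (t : ℕ) : Prop :=
  1 ≤ t ∧ t ≤ J ∧ s ∈ (S.c t).dom ∧ s ∉ (S.c (t - 1)).dom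

/-- `s` is colored at stage `t` via a seed addition. -/
def SeedAt (S : ColoringSeq D J) (s : D.Strand) (t : ℕ) : Prop :=
  S.StageOf s t ∧ SeedAdd D (t : ℤ) (S.c (t - 1)) (S.c t)

/-- `s` is a seed strand of the sequence. -/
def IsSeedStrand (S : ColoringSeq D J) (s : D.Strand) : Prop := ∃ t, S.SeedAt s t

/-- The crossing `x` is multi-colored at stage `t`: all three of its strands are
colored and its two under-strands have different colors. -/
def MultiColoredAt (S : ColoringSeq D J) (x : D.Crossing) (t : ℕ) : Prop :=
  D.overStrand x ∈ (S.c t).dom ∧ D.under1 x ∈ (S.c t).dom ∧ D.under2 x ∈ (S.c t).dom ∧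
  (S.c t).col (D.under1 x) ≠ (S.c t).col (D.under2 x)

def MultiColored (S : ColoringSeq D J) (x : D.Crossing) : Prop :=
  ∃ t ≤ J, S.MultiColoredAt x t

/-- `t` is the (first) stage at which `x` becomes multi-colored. -/
def McStage (S : ColoringSeq D J) (x : D.Crossing) (t : ℕ) : Prop :=
  t ≤ J ∧ S.MultiColoredAt x t ∧ ∀ u < t, ¬ S.MultiColoredAt x u

end ColoringSeq

/-- A diagram is non-trivial if every completed coloring sequence on it uses at
least two seed additions (equivalently, it is not a diagram of the unknot). -/
def NonTrivialDiagram (D : Diagram) : Prop :=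
  ∀ (J : ℕ) (S : ColoringSeq D J), S.Completed →
    2 ≤ Set.ncard {s : D.Strand | S.IsSeedStrand s}
/-! Δ-orderings and attached sequences. -/

/-- A Δ-ordering of a completed coloring sequence: positions for strands and
(multi-colored) crossings, listing elements in order of stages, with the newly
colored strand of each stage listed before the crossings that become
multi-colored at that stage. -/
structure DeltaOrdering {D : Diagram} {J : ℕ} (S : ColoringSeq D J) where
  posS : D.Strand → ℕ
  posC : D.Crossing → ℕ
  stage : D.Strand → ℕ
  cstage : D.Crossing → ℕ
  stage_spec : ∀ s, S.StageOf s (stage s)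
  cstage_spec : ∀ x, S.MultiColored x → S.McStage x (cstage x)
  posS_inj : Function.Injective posS
  posC_inj : ∀ x y, S.MultiColored x → S.MultiColored y → posC x = posC y → x = y
  posSC_ne : ∀ s x, S.MultiColored x → posS s ≠ posC x
  mono_SS : ∀ s s', stage s < stage s' → posS s < posS s'
  mono_SC : ∀ s x, S.MultiColored x → stage s ≤ cstage x → posS s < posC x
  mono_CS : ∀ x s, S.MultiColored x → cstage x < stage s → posC x < posS s

/-- Position of an element (strand or crossing) in a Δ-ordering. -/
def posE {D : Diagram} {J : ℕ} {S : ColoringSeq D J} (Δ : DeltaOrdering S) :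
    D.Strand ⊕ D.Crossing → ℕ :=
  Sum.elim Δ.posS Δ.posC

/-- `l` is the restriction of the Δ-ordering to the seed strands and multi-colored
crossings, encoded as a list of Booleans (`true` = seed strand, `false` =
multi-colored crossing) in the order given by the Δ-ordering. -/
def RestrictedDelta {D : Diagram} {J : ℕ} {S : ColoringSeq D J} (Δ : DeltaOrdering S)
    (l : List Bool) : Prop :=
  ∃ e : List (D.Strand ⊕ D.Crossing),
    l = e.map (Sum.elim (fun _ => true) (fun _ => false)) ∧
    e.Nodup ∧
    (∀ s : D.Strand, Sum.inl s ∈ e ↔ S.IsSeedStrand s) ∧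
    (∀ x : D.Crossing, Sum.inr x ∈ e ↔ S.MultiColored x) ∧
    e.Pairwise (fun a b => posE Δ a < posE Δ b)

/-- The attached sequence of a restricted Δ-ordering: `a 0 = 2`; each seed strand
after the first contributes `+2` and each multi-colored crossing contributes `-2`. -/
def attachedTerm (l : List Bool) : ℕ → ℤ
  | 0 => 2
  | (j + 1) => 2 + 2 * (((l.take (j + 1)).drop 1).count true : ℤ)
      - 2 * ((l.take (j + 1)).count false : ℤ)

/-- The sum `Σ_{i=1}^{N} a_i` of the attached sequence. -/
def WSum (l : List Bool) : ℤ := ∑ i ∈ Finset.range l.length, attachedTerm l (i + 1)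

/-- The set of values `Σ a_i` of completed coloring sequences on `D`;
the Wirtinger width `𝕎(D)` is its least element. -/
def DiagWSet (D : Diagram) : Set ℤ :=
  {w | ∃ (J : ℕ) (S : ColoringSeq D J) (Δ : DeltaOrdering S) (l : List Bool),
      S.Completed ∧ RestrictedDelta Δ l ∧ w = WSum l}
/-! Geometric framework: knots in ℝ³, Morse position, width, planar diagrams. -/

noncomputable section

/-- The standard height function on ℝ³, `h(x,y,z) = z`. -/
def ht3 (p : ℝ × ℝ × ℝ) : ℝ := p.2.2

/-- Projection to the yz-plane, `p(x,y,z) = (y,z)`. -/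
def proj23 (p : ℝ × ℝ × ℝ) : ℝ × ℝ := (p.2.1, p.2.2)

/-- Height of a point of the yz-plane. -/
def ht2 (p : ℝ × ℝ) : ℝ := p.2

/-- An embedded knot in ℝ³, parametrized by ℝ with period 1. -/
structure KnotEmb where
  γ : ℝ → ℝ × ℝ × ℝ
  periodic : Function.Periodic γ 1
  cont : Continuous γ
  inj : Set.InjOn γ (Set.Ico 0 1)

/-- Ambient isotopy of knots (through embeddings). -/
def Isotopic (K K' : KnotEmb) : Prop :=
  ∃ H : ℝ → ℝ → ℝ × ℝ × ℝ,
    Continuous (fun p : ℝ × ℝ => H p.1 p.2) ∧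
    (∀ u ∈ Set.Icc (0:ℝ) 1, Function.Periodic (H u) 1 ∧ Set.InjOn (H u) (Set.Ico 0 1)) ∧
    H 0 = K.γ ∧ H 1 = K'.γ

/-- A knot in Morse position with respect to the height function: a finite set of
isolated critical parameters (each a local max or local min of the height, with
distinct critical values), and no other local extrema. -/
structure MorseKnot extends KnotEmb where
  crit : Finset ℝ
  crit_sub : ∀ c ∈ crit, c ∈ Set.Ico (0:ℝ) 1
  crit_extr : ∀ c ∈ crit,
    IsLocalMax (fun t => ht3 (γ t)) c ∨ IsLocalMin (fun t => ht3 (γ t)) c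
  noncrit : ∀ t ∈ Set.Ico (0:ℝ) 1, t ∉ crit →
    ¬ IsLocalMax (fun t => ht3 (γ t)) t ∧ ¬ IsLocalMin (fun t => ht3 (γ t)) t
  crit_val_inj : Set.InjOn (fun t => ht3 (γ t)) crit

/-- The number of points of the knot at height `r` (w(r) = |K ∩ h⁻¹(r)|). -/
def levelCount (K : MorseKnot) (r : ℝ) : ℕ :=
  Set.ncard {t | t ∈ Set.Ico (0:ℝ) 1 ∧ ht3 (K.γ t) = r}

/-- `w` is the Gabai width of the Morse embedding `K`: the sum of level counts at
regular values interleaving the critical values `c 1 > c 2 > … > c N`. -/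
def IsWidth (K : MorseKnot) (w : ℕ) : Prop :=
  ∃ (N : ℕ) (c : ℕ → ℝ) (r : ℕ → ℝ),
    N = K.crit.card ∧
    (∀ i j, 1 ≤ i → i < j → j ≤ N → c j < c i) ∧
    (∀ v, (∃ t ∈ K.crit, ht3 (K.γ t) = v) ↔ ∃ i, 1 ≤ i ∧ i ≤ N ∧ c i = v) ∧
    (∀ i, 1 ≤ i → i ≤ N - 1 → c (i + 1) < r i ∧ r i < c i) ∧
    w = ∑ i ∈ Finset.Icc 1 (N - 1), levelCount K (r i)

/-- Thin position: the width is minimal over the ambient isotopy class. -/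
def ThinPosition (K : MorseKnot) : Prop :=
  ∀ (K' : MorseKnot) (w w' : ℕ), Isotopic K.toKnotEmb K'.toKnotEmb →
    IsWidth K w → IsWidth K' w' → w ≤ w'

/-- `w` is the Gabai width of the knot type of `K0`. -/
def IsGabaiWidth (K0 : KnotEmb) (w : ℕ) : Prop :=
  IsLeast {w | ∃ K' : MorseKnot, Isotopic K0 K'.toKnotEmb ∧ IsWidth K' w} w

/-- A knot diagram realized in the (y,z)-plane: each strand is an embedded arc,
each crossing a point, under-strands end at their crossings and the over-strand
passes through. -/
structure PlanarDiagram extends Diagram where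
  arc : Strand → ℝ → ℝ × ℝ
  arc_cont : ∀ s, Continuous (arc s)
  arc_inj : ∀ s, Set.InjOn (arc s) (Set.Ico 0 1)
  crossPt : Crossing → ℝ × ℝ
  crossPt_inj : Function.Injective crossPt
  under1_end : ∀ x, arc (under1 x) 0 = crossPt x ∨ arc (under1 x) 1 = crossPt x
  under2_end : ∀ x, arc (under2 x) 0 = crossPt x ∨ arc (under2 x) 1 = crossPt x
  over_mem : ∀ x, crossPt x ∈ arc (overStrand x) '' Set.Icc 0 1

/-- `PD` is a diagram of the knot `K0`: projecting `K0` to the yz-plane yields the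
union of the strands, and every crossing is a double point of the projection. -/
def DiagramOf (K0 : KnotEmb) (PD : PlanarDiagram) : Prop :=
  (proj23 '' Set.range K0.γ = ⋃ s : PD.Strand, PD.arc s '' Set.Icc 0 1) ∧
  ∀ x : PD.Crossing, ∃ p q, p ∈ Set.range K0.γ ∧ q ∈ Set.range K0.γ ∧ p ≠ q ∧
    proj23 p = PD.crossPt x ∧ proj23 q = PD.crossPt x

/-- The height of a strand: the maximal height of its points. -/
def strandH (PD : PlanarDiagram) (s : PD.Strand) : ℝ :=
  sSup ((fun u => ht2 (PD.arc s u)) '' Set.Icc 0 1)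

/-- `h` restricted to the strand `s` has a local extremum at parameter `t`. -/
def LocalExtrAt (PD : PlanarDiagram) (s : PD.Strand) (t : ℝ) : Prop :=
  IsLocalMaxOn (fun u => ht2 (PD.arc s u)) (Set.Icc 0 1) t ∨
  IsLocalMinOn (fun u => ht2 (PD.arc s u)) (Set.Icc 0 1) t

/-- `h|_s` attains its maximum in the interior of `s`. -/
def InteriorMax (PD : PlanarDiagram) (s : PD.Strand) : Prop :=
  ∃ t ∈ Set.Ioo (0:ℝ) 1, ∀ u ∈ Set.Icc (0:ℝ) 1, ht2 (PD.arc s u) ≤ ht2 (PD.arc s t)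

/-- `h|_s` attains its minimum in the interior of `s`. -/
def InteriorMin (PD : PlanarDiagram) (s : PD.Strand) : Prop :=
  ∃ t ∈ Set.Ioo (0:ℝ) 1, ∀ u ∈ Set.Icc (0:ℝ) 1, ht2 (PD.arc s t) ≤ ht2 (PD.arc s u)

/-- The diagram is in general position with respect to the height function: all
crossings and all critical points of the height on the diagram have distinct
heights. -/
def GeneralPosition (PD : PlanarDiagram) : Prop :=
  (Function.Injective fun x => ht2 (PD.crossPt x)) ∧
  (Function.Injective fun s => strandH PD s) ∧
  (∀ (s : PD.Strand) (t : ℝ) (x : PD.Crossing), t ∈ Set.Ioo (0:ℝ) 1 →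
    LocalExtrAt PD s t → ht2 (PD.arc s t) ≠ ht2 (PD.crossPt x)) ∧
  (∀ (s s' : PD.Strand) (t t' : ℝ), t ∈ Set.Ioo (0:ℝ) 1 → t' ∈ Set.Ioo (0:ℝ) 1 →
    LocalExtrAt PD s t → LocalExtrAt PD s' t' → (s ≠ s' ∨ t ≠ t') →
    ht2 (PD.arc s t) ≠ ht2 (PD.arc s' t'))

/-- `r` is a regular value of the height function restricted to the diagram. -/
def RegularValue (PD : PlanarDiagram) (r : ℝ) : Prop :=
  (∀ x : PD.Crossing, r ≠ ht2 (PD.crossPt x)) ∧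
  ∀ (s : PD.Strand) (t : ℝ), t ∈ Set.Icc (0:ℝ) 1 → LocalExtrAt PD s t →
    r ≠ ht2 (PD.arc s t)

/-- The crossing `x` is an endpoint of the strand `s`. -/
def endAt (PD : PlanarDiagram) (s : PD.Strand) (x : PD.Crossing) : Prop :=
  PD.arc s 0 = PD.crossPt x ∨ PD.arc s 1 = PD.crossPt x

/-- `s` is the falling strand of the crossing `x`: `s` is an under-strand ending at
`x` and the height along `s` has a local maximum there. -/
def FallingAt (PD : PlanarDiagram) (s : PD.Strand) (x : PD.Crossing) : Prop :=
  ∃ t₀ : ℝ, (t₀ = 0 ∨ t₀ = 1) ∧ PD.arc s t₀ = PD.crossPt x ∧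
    IsLocalMaxOn (fun u => ht2 (PD.arc s u)) (Set.Icc 0 1) t₀

/-- A coloring of the diagram `D` by height: strands are colored in order of
decreasing height; a strand gets a seed addition iff its height is attained in
its interior, and otherwise inherits its color via a coloring move over its
higher incident crossing. -/
structure ColorByHeight (PD : PlanarDiagram) (J : ℕ) (S : ColoringSeq PD.toDiagram J) where
  compl : S.Completed
  e : Fin J → PD.Strand
  e_bij : Function.Bijective e
  e_anti : ∀ i j : Fin J, i < j → strandH PD (e j) < strandH PD (e i)
  stages : ∀ i : Fin J,
    (S.c (i.val + 1)).dom = insert (e i) (S.c i.val).dom ∧ e i ∉ (S.c i.val).dom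
  seed_iff : ∀ i : Fin J,
    (SeedAdd PD.toDiagram ((i.val : ℤ) + 1) (S.c i.val) (S.c (i.val + 1)) ↔
      InteriorMax PD (e i))
  move_higher : ∀ i : Fin J, ¬ InteriorMax PD (e i) →
    ∃ x : PD.Crossing, endAt PD (e i) x ∧
      (∀ x', endAt PD (e i) x' → ht2 (PD.crossPt x') ≤ ht2 (PD.crossPt x)) ∧
      MoveOver PD.toDiagram x (S.c i.val) (S.c (i.val + 1))

/-- `w` is the Wirtinger width of the knot type of `K0`: the least value of
`Σ a_i` over diagrams of the knot type and completed coloring sequences. -/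
def IsWirtingerWidth (K0 : KnotEmb) (w : ℤ) : Prop :=
  IsLeast {w | ∃ (K' : KnotEmb) (PD : PlanarDiagram),
    Isotopic K0 K' ∧ DiagramOf K' PD ∧ w ∈ DiagWSet PD.toDiagram} w

end


section AuxWellDefined

variable {D : Diagram} {J : ℕ}

lemma aux_dom_mono (S : ColoringSeq D J) {a b : ℕ} (hab : a ≤ b) (hb : b ≤ J) :
    (S.c a).dom ⊆ (S.c b).dom := by
  induction b with
  | zero => simpa using (Nat.le_zero.mp hab ▸ le_refl (S.c 0).dom)
  | succ n ih =>
      rcases Nat.eq_or_lt_of_le hab with h | h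
      · exact h ▸ le_refl _
      · have h1 : a ≤ n := Nat.lt_succ_iff.mp h
        have hsub : (S.c a).dom ⊆ (S.c n).dom := ih h1 (le_trans (Nat.le_succ n) hb)
        rcases S.step n hb with ⟨s, _, hdom, _⟩ | ⟨x, sq, sp, _, _, _, _, hdom, _⟩ <;>
          · rw [hdom]
            exact hsub.trans (Finset.subset_insert _ _)

lemma aux_stage_lt_false (S : ColoringSeq D J) {s : D.Strand} {t t' : ℕ}
    (h : S.StageOf s t) (h' : S.StageOf s t') (hlt : t < t') : False := by
  obtain ⟨_, _, hmem, _⟩ := h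
  obtain ⟨h1, h2, _, hnot⟩ := h'
  exact hnot (aux_dom_mono S (by omega : t ≤ t' - 1) (by omega) hmem)

lemma aux_stage_unique (S : ColoringSeq D J) {s : D.Strand} {t t' : ℕ}
    (h : S.StageOf s t) (h' : S.StageOf s t') : t = t' := by
  rcases lt_trichotomy t t' with hlt | heq | hgt
  · exact absurd (aux_stage_lt_false S h h' hlt) id
  · exact heq
  · exact absurd (aux_stage_lt_false S h' h hgt) id

lemma aux_mcstage_unique (S : ColoringSeq D J) {x : D.Crossing} {t t' : ℕ}
    (h : S.McStage x t) (h' : S.McStage x t') : t = t' := by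
  rcases lt_trichotomy t t' with hlt | heq | hgt
  · exact (h'.2.2 t hlt h.2.1).elim
  · exact heq
  · exact (h.2.2 t' hgt h'.2.1).elim

/-- Every stage `1 ≤ t ≤ J` colors some strand. -/
lemma aux_exists_strand_at (S : ColoringSeq D J) {t : ℕ} (h1 : 1 ≤ t) (h2 : t ≤ J) :
    ∃ s : D.Strand, S.StageOf s t := by
  obtain ⟨n, rfl⟩ : ∃ n, t = n + 1 := ⟨t - 1, by omega⟩
  rcases S.step n h2 with ⟨s, hs, hdom, _⟩ | ⟨x, sq, sp, hsq, _, _, _, hdom, _⟩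
  · exact ⟨s, h1, h2, by rw [hdom]; exact Finset.mem_insert_self _ _, by simpa using hs⟩
  · exact ⟨sq, h1, h2, by rw [hdom]; exact Finset.mem_insert_self _ _, by simpa using hsq⟩

lemma aux_mcstage_pos (S : ColoringSeq D J) {x : D.Crossing} {t : ℕ}
    (h : S.McStage x t) : 1 ≤ t := by
  by_contra hc
  have ht0 : t = 0 := by omega
  obtain ⟨_, ⟨hmem, _⟩, _⟩ := h
  rw [ht0, S.init] at hmem
  simp at hmem

end AuxWellDefined

/-- Any two Δ-orderings of the same completed coloring sequence yield the same
attached sequence, hence the same total `Σ a_i`: the Wirtinger width contribution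
of a completed coloring sequence is well-defined. -/
theorem attached_sequence_well_defined
    (D : Diagram) (J : ℕ) (S : ColoringSeq D J) (hS : S.Completed)
    (Δ Δ' : DeltaOrdering S) (l l' : List Bool)
    (hl : RestrictedDelta Δ l) (hl' : RestrictedDelta Δ' l') :
    (∀ j, attachedTerm l j = attachedTerm l' j) ∧ WSum l = WSum l' := by
  classical
  obtain ⟨e, hle, hnd, hinl, hinr, hpw⟩ := hl
  obtain ⟨e', hle', hnd', hinl', hinr', hpw'⟩ := hl'
  set k : D.Strand ⊕ D.Crossing → ℕ :=
    Sum.elim (fun s => 2 * Δ.stage s) (fun x => 2 * Δ.cstage x + 1) with hk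
  -- crossings are ordered by their (unique) multicoloring stage
  have hCC : ∀ (Δ₀ : DeltaOrdering S) (x y : D.Crossing), S.MultiColored x → S.MultiColored y →
      Δ₀.cstage y < Δ₀.cstage x → Δ₀.posC y < Δ₀.posC x := by
    intro Δ₀ x y hx hy hlt
    have hx' := Δ₀.cstage_spec x hx
    obtain ⟨s, hs⟩ := aux_exists_strand_at S (aux_mcstage_pos S hx') hx'.1
    have hst : Δ₀.stage s = Δ₀.cstage x := aux_stage_unique S (Δ₀.stage_spec s) hs
    exact lt_trans (Δ₀.mono_CS y s hy (by omega)) (Δ₀.mono_SC s x hx (by omega))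
  -- sortedness of the key list, for any Δ-ordering
  have key : ∀ (Δ₀ : DeltaOrdering S) (e₀ : List (D.Strand ⊕ D.Crossing)),
      (∀ x : D.Crossing, Sum.inr x ∈ e₀ → S.MultiColored x) →
      e₀.Pairwise (fun a b => posE Δ₀ a < posE Δ₀ b) →
      (e₀.map (Sum.elim (fun s => 2 * Δ₀.stage s)
        (fun x => 2 * Δ₀.cstage x + 1))).Pairwise (· ≤ ·) := by
    intro Δ₀ e₀ hmc hpw₀
    rw [List.pairwise_map]
    refine List.Pairwise.imp_of_mem (fun {a b} ha hb hab => ?_) hpw₀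
    match a, b with
    | Sum.inl s, Sum.inl s' =>
        simp only [posE, Sum.elim_inl] at hab ⊢
        by_contra hc
        exact absurd (Δ₀.mono_SS s' s (by omega)) (by omega)
    | Sum.inl s, Sum.inr x =>
        simp only [posE, Sum.elim_inl, Sum.elim_inr] at hab ⊢
        by_contra hc
        exact absurd (Δ₀.mono_CS x s (hmc x hb) (by omega)) (by omega)
    | Sum.inr x, Sum.inl s =>
        simp only [posE, Sum.elim_inl, Sum.elim_inr] at hab ⊢
        by_contra hc
        exact absurd (Δ₀.mono_SC s x (hmc x ha) (by omega)) (by omega)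
    | Sum.inr x, Sum.inr y =>
        simp only [posE, Sum.elim_inr] at hab ⊢
        by_contra hc
        exact absurd (hCC Δ₀ x y (hmc x ha) (hmc y hb) (by omega)) (by omega)
  have sorted1 : (e.map k).Pairwise (· ≤ ·) :=
    key Δ e (fun x hx => (hinr x).mp hx) hpw
  have sorted2' : (e'.map (Sum.elim (fun s => 2 * Δ'.stage s)
      (fun x => 2 * Δ'.cstage x + 1))).Pairwise (· ≤ ·) :=
    key Δ' e' (fun x hx => (hinr' x).mp hx) hpw'
  -- the key function is ordering-independent on the relevant elements
  have hkeq : ∀ a ∈ e', (Sum.elim (fun s => 2 * Δ'.stage s)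
      (fun x => 2 * Δ'.cstage x + 1)) a = k a := by
    rintro (s | x) ha
    · simp only [hk, Sum.elim_inl]
      rw [aux_stage_unique S (Δ'.stage_spec s) (Δ.stage_spec s)]
    · have hx : S.MultiColored x := (hinr' x).mp ha
      simp only [hk, Sum.elim_inr]
      rw [aux_mcstage_unique S (Δ'.cstage_spec x hx) (Δ.cstage_spec x hx)]
  have sorted2 : (e'.map k).Pairwise (· ≤ ·) := by
    rwa [← List.map_congr_left hkeq]
  have hperm : e.Perm e' := by
    rw [List.perm_ext_iff_of_nodup hnd hnd']
    rintro (s | x)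
    · rw [hinl, hinl']
    · rw [hinr, hinr']
  have hmapeq : e.map k = e'.map k :=
    List.Perm.eq_of_pairwise' sorted1 sorted2 (hperm.map k)
  -- the boolean labels are determined by the parity of the key
  have hfk : ∀ a : D.Strand ⊕ D.Crossing,
      Sum.elim (fun _ => true) (fun _ => false) a = decide (k a % 2 = 0) := by
    rintro (s | x) <;> simp [hk] <;> omega
  have hll : ∀ (e₀ : List (D.Strand ⊕ D.Crossing)),
      e₀.map (Sum.elim (fun _ => true) (fun _ => false)) =
        (e₀.map k).map (fun n => decide (n % 2 = 0)) := by
    intro e₀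
    rw [List.map_map]
    exact List.map_congr_left (fun a _ => hfk a)
  have hfin : l = l' := by
    rw [hle, hle', hll e, hll e', hmapeq]
  subst hfin
  exact ⟨fun _ => rfl, rfl⟩
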